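/- For every n ≥ 2, ∫₀¹ (x² − 1)·[C^{(2)}_{n−2}(x)]² dx = −((2n² − 1)/16)·(ψ(n + 1/2) + γ + log 4) + n²/8. -/

import Mathlib

open Polynomial Real

/-- The digamma function `ψ(x) = d/dx log Γ(x)`. -/
noncomputable def digamma (x : ℝ) : ℝ := deriv (fun y => Real.log (Real.Gamma y)) x

/-- The Gegenbauer polynomial of index 2, defined by `2 C²ₙ(x) = d/dx U_{n+1}(x)`. -/
noncomputable def gegenbauer2 (n : ℕ) : Polynomial ℝ :=
  Polynomial.C (1 / 2 : ℝ) * Polynomial.derivative (Polynomial.Chebyshev.U ℝ (n + 1))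

section Aux
open Polynomial.Chebyshev

/-- `2 U m T k = U (m+k) + U (m-k)`. -/
theorem U_mul_T (m k : ℤ) : 2 * U ℝ m * T ℝ k = U ℝ (m + k) + U ℝ (m - k) := by
  induction k using Polynomial.Chebyshev.induct with
  | zero => simp [two_mul]
  | one => rw [T_one]; linear_combination -U_add_one ℝ m
  | add_two k ih1 ih2 =>
    have h₁ := U_add_two ℝ (m + k)
    have h₂ := U_sub_two ℝ (m - k)
    have h₃ := T_add_two ℝ k
    linear_combination (norm := ring_nf) 2 * U ℝ m * h₃ - h₂ - h₁ - ih2 + 2 * (X : ℝ[X]) * ih1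
  | neg_add_one k ih1 ih2 =>
    have h₁ := U_add_two ℝ (m + (-k - 1))
    have h₂ := U_sub_two ℝ (m - (-k - 1))
    have h₃ := T_add_two ℝ (-k - 1)
    linear_combination (norm := ring_nf) 2 * U ℝ m * h₃ - h₂ - h₁ - ih2 + 2 * (X : ℝ[X]) * ih1

/-- `(1 - X²) (2 U m U k) = T (m-k) - T (m+k+2)`. -/
theorem UU (m k : ℤ) : (1 - X ^ 2) * (2 * U ℝ m * U ℝ k) = T ℝ (m - k) - T ℝ (m + k + 2) := by
  induction k using Polynomial.Chebyshev.induct with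
  | zero =>
    have h₁ := one_sub_X_sq_mul_U_eq_pol_in_T ℝ m
    have h₂ := T_mul_T ℝ (m+1) 1
    simp only [U_zero, T_one] at *
    linear_combination (norm := ring_nf) 2*h₁ + h₂
  | one =>
    have h₁ := one_sub_X_sq_mul_U_eq_pol_in_T ℝ (m+1)
    have h₂ := one_sub_X_sq_mul_U_eq_pol_in_T ℝ (m-1)
    have h₃ := U_mul_T m 1
    have h₄ := T_mul_T ℝ (m+2) 1
    have h₅ := T_mul_T ℝ m 1
    simp only [U_one, T_one] at *
    linear_combination (norm := ring_nf) 2*h₁ + 2*h₂ + (2 - 2*(X:ℝ[X])^2)*h₃ + h₄ + h₅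
  | add_two k ih1 ih2 =>
    have h₁ := T_sub_two ℝ (m - k)
    have h₂ := T_add_two ℝ (m + k + 2)
    have h₃ := U_add_two ℝ k
    linear_combination (norm := ring_nf) (1 - (X:ℝ[X])^2) * 2 * U ℝ m * h₃ + h₂ - h₁ - ih2 + 2 * (X : ℝ[X]) * ih1
  | neg_add_one k ih1 ih2 =>
    have h₁ := T_sub_two ℝ (m - (-k-1))
    have h₂ := T_add_two ℝ (m + (-k-1) + 2)
    have h₃ := T_add_two ℝ (-k - 1)
    have h₄ := U_add_two ℝ (-k-1)
    linear_combination (norm := ring_nf) (1 - (X:ℝ[X])^2) * 2 * U ℝ m * h₄ + h₂ - h₁ - ih2 + 2 * (X : ℝ[X]) * ih1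

theorem XT (k : ℤ) : 2 * X * T ℝ k = T ℝ (k + 1) + T ℝ (k - 1) := by
  have h := T_mul_T ℝ k 1
  rw [T_one] at h
  linear_combination h

theorem XXT (k : ℤ) : 4 * X ^ 2 * T ℝ k = T ℝ (k + 2) + 2 * T ℝ k + T ℝ (k - 2) := by
  linear_combination (norm := ring_nf) 2 * (X:ℝ[X]) * (XT k) + XT (k+1) + XT (k-1)

theorem YT (k : ℤ) : 4 * (1 - X ^ 2) * T ℝ k = 2 * T ℝ k - T ℝ (k + 2) - T ℝ (k - 2) := by
  linear_combination (norm := ring_nf) -(XXT k)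

theorem YYUsq (j : ℤ) : 8 * (1 - X ^ 2) ^ 2 * (U ℝ j) ^ 2
    = 2 - 2 * T ℝ 2 - 2 * T ℝ (2*j+2) + T ℝ (2*j+4) + T ℝ (2*j) := by
  have hu := UU j j
  have h2 := T_two ℝ
  have hyt := YT (2*j+2)
  have hz := T_zero ℝ
  linear_combination (norm := ring_nf) (4 - 4*X^2) * hu + 2*h2 - hyt + (4 - 4*X^2)*hz

theorem YBsq (j : ℤ) : 8 * (1 - X ^ 2) * (X * U ℝ j - ((j:ℝ[X])+1) * T ℝ (j+1)) ^ 2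
    = 2 * (1 - ((j:ℝ[X])+1)^2) * T ℝ 2 + 2 * (1 + ((j:ℝ[X])+1)^2)
      + 2 * (((j:ℝ[X])+1)^2 - 1) * T ℝ (2*j+2)
      - (((j:ℝ[X])+1)+1)^2 * T ℝ (2*j) - (((j:ℝ[X])+1)-1)^2 * T ℝ (2*j+4) := by
  set c : ℝ[X] := (j:ℝ[X]) + 1 with hc
  have hu := UU j j
  have hut := U_mul_T j (j+1)
  have hn := U_neg_one ℝ
  have hU0 := U_zero ℝ
  have hyu := UU (2*j+1) 0
  have hxt1 := XT (2*j+1)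
  have hxt3 := XT (2*j+3)
  have htt := T_mul_T ℝ (j+1) (j+1)
  have hyt := YT (2*j+2)
  have h2 := T_two ℝ
  have hz := T_zero ℝ
  linear_combination (norm := ring_nf)
    4*X^2*hu + 4*X^2*hz - XXT (2*j+2) - 2*h2
    - 8*c*X*(1-X^2)*hut - 8*c*X*(1-X^2)*hn + 8*c*X*(1-X^2)*(U ℝ (2*j+1))*hU0
    - 4*c*X*hyu - 2*c*hxt1 + 2*c*hxt3
    + 4*c^2*(1-X^2)*htt + 4*c^2*(1-X^2)*hz + 2*c^2*h2 + c^2*hyt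

theorem Ysq_ne : ((1 : ℝ[X]) - X ^ 2) ≠ 0 := by
  intro h
  have := congrArg (Polynomial.eval 0) h
  simp at this

theorem key8 (M : ℕ) : 8 * (X ^ 2 - 1) * (X * U ℝ (M:ℤ) - ((M:ℝ[X]) + 1) * T ℝ ((M:ℤ)+1)) ^ 2
    = 8 * (1 - X ^ 2) ^ 2 * (((M:ℝ[X]))^2 * (U ℝ (M:ℤ))^2
        - 4 * ∑ k ∈ Finset.range M, ((k:ℝ[X])+1) * (U ℝ (k:ℤ))^2) := by
  induction M with
  | zero => norm_num [T_one]
  | succ M ih =>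
    have h1 := YBsq (M:ℤ)
    have h2 := YBsq ((M:ℤ)+1)
    have h3 := YYUsq (M:ℤ)
    have h4 := YYUsq ((M:ℤ)+1)
    rw [Finset.sum_range_succ]
    set S : ℝ[X] := ∑ k ∈ Finset.range M, ((k:ℝ[X])+1) * (U ℝ (k:ℤ))^2 with hS
    linear_combination (norm := (push_cast; ring_nf))
      ih + h1 - h2 - ((M:ℝ[X])+1)^2*h4 + ((M:ℝ[X])+2)^2*h3

theorem key (M : ℕ) : (X ^ 2 - 1) * (derivative (U ℝ (M:ℤ))) ^ 2
    = ((M:ℝ[X]))^2 * (U ℝ (M:ℤ))^2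
        - 4 * ∑ k ∈ Finset.range M, ((k:ℝ[X])+1) * (U ℝ (k:ℤ))^2 := by
  have h8 : (8 * ((1:ℝ[X]) - X ^ 2) ^ 2) ≠ 0 :=
    mul_ne_zero (by norm_num) (pow_ne_zero _ Ysq_ne)
  apply mul_left_cancel₀ h8
  have hB := add_one_mul_T_eq_poly_in_U (R := ℝ) (M:ℤ)
  have hk := key8 M
  set S : ℝ[X] := ∑ k ∈ Finset.range M, ((k:ℝ[X])+1) * (U ℝ (k:ℤ))^2 with hS
  linear_combination (norm := (push_cast; ring_nf)) hk
    + 8*(X^2-1)*(X * U ℝ (M:ℤ) - ((M:ℝ[X])+1) * T ℝ ((M:ℤ)+1) + (1-X^2) * derivative (U ℝ (M:ℤ)))*hB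

theorem Usq_diff (k : ℕ) : (U ℝ ((k:ℤ)+1)) ^ 2 = (U ℝ (k:ℤ)) ^ 2 + U ℝ (2*(k:ℤ)+2) := by
  have h2Y : (2 * ((1:ℝ[X]) - X ^ 2)) ≠ 0 := mul_ne_zero (by norm_num) Ysq_ne
  apply mul_left_cancel₀ h2Y
  have h1 := UU ((k:ℤ)+1) ((k:ℤ)+1)
  have h2 := UU (k:ℤ) (k:ℤ)
  have h3 := UU (2*(k:ℤ)+2) 0
  have h0 := U_zero ℝ
  linear_combination (norm := ring_nf) h1 - h2 - h3 + 2*(1-X^2)*(U ℝ (2*(k:ℤ)+2))*h0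

theorem T_eval_one (m : ℤ) : (T ℝ m).eval 1 = 1 := by
  induction m using Polynomial.Chebyshev.induct with
  | zero => simp
  | one => simp
  | add_two k ih1 ih2 => rw [T_add_two]; simp [ih1, ih2]; norm_num
  | neg_add_one k ih1 ih2 =>
    simp only [T_neg] at ih1
    rw [show (-(k:ℤ) - 1) = (-(k:ℤ) + 1) - 2 by ring, T_sub_two]
    simp only [show (-(k:ℤ) + 1 - 1) = -(k:ℤ) by ring]
    simp [ih1, ih2, T_neg]; norm_num

theorem T_odd_eval_zero (j : ℕ) : (T ℝ (2*(j:ℤ)+1)).eval 0 = 0 := by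
  induction j with
  | zero => norm_num [T_one]
  | succ j ih =>
    push_cast
    rw [show (2*((j:ℤ)+1)+1) = (2*(j:ℤ)+1) + 2 by ring, T_add_two]
    push_cast at ih
    simp [ih]

theorem integral_eval_derivative (p : ℝ[X]) :
    ∫ x in (0:ℝ)..1, (derivative p).eval x = p.eval 1 - p.eval 0 := by
  refine intervalIntegral.integral_eq_sub_of_hasDerivAt (fun x _ => p.hasDerivAt x) ?_
  exact (Polynomial.continuous _).intervalIntegrable _ _

theorem integral_eval_U_even (j : ℕ) :
    ∫ x in (0:ℝ)..1, (U ℝ (2*(j:ℤ))).eval x = 1/(2*(j:ℝ)+1) := by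
  have hT : derivative (T ℝ (2*(j:ℤ)+1)) = ((2*(j:ℤ)+1 : ℤ) : ℝ[X]) * U ℝ (2*(j:ℤ)) := by
    simpa using T_derivative_eq_U (R := ℝ) (2*(j:ℤ)+1)
  have h := integral_eval_derivative (T ℝ (2*(j:ℤ)+1))
  rw [hT, _root_.T_eval_one, T_odd_eval_zero] at h
  simp only [eval_mul, eval_intCast] at h
  rw [intervalIntegral.integral_const_mul] at h
  have h21 : (2*(j:ℝ)+1) ≠ 0 := by positivity
  push_cast at h
  field_simp
  linarith [h]

theorem Usq_expand (k : ℕ) :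
    (U ℝ (k:ℤ))^2 = ∑ j ∈ Finset.range (k+1), U ℝ (2*(j:ℤ)) := by
  induction k with
  | zero => simp
  | succ k ih =>
    rw [Finset.sum_range_succ, ← ih]
    have := Usq_diff k
    push_cast
    linear_combination (norm := (push_cast; ring_nf)) this

theorem Jlem (k : ℕ) : ∫ x in (0:ℝ)..1, ((U ℝ (k:ℤ)).eval x)^2
    = ∑ j ∈ Finset.range (k+1), 1/(2*(j:ℝ)+1) := by
  have h1 : ∀ x : ℝ, ((U ℝ (k:ℤ)).eval x)^2
      = ∑ j ∈ Finset.range (k+1), (U ℝ (2*(j:ℤ))).eval x := by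
    intro x
    have := congrArg (eval x) (Usq_expand k)
    simpa [eval_pow, eval_finset_sum] using this
  rw [intervalIntegral.integral_congr (g := fun x => ∑ j ∈ Finset.range (k+1), (U ℝ (2*(j:ℤ))).eval x) (fun x _ => h1 x)]
  rw [intervalIntegral.integral_finset_sum
    (fun i _ => (Polynomial.continuous _).intervalIntegrable _ _)]
  exact Finset.sum_congr rfl fun j _ => integral_eval_U_even j

open Real in
theorem digamma_rec {x : ℝ} (hx : 0 < x) :
    deriv (fun y => Real.log (Real.Gamma y)) (x + 1)
      = deriv (fun y => Real.log (Real.Gamma y)) x + 1 / x := by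
  have hder : ∀ {y : ℝ}, 0 < y → DifferentiableAt ℝ (fun y => Real.log (Real.Gamma y)) y := by
    intro y hy
    exact (Real.differentiableAt_Gamma (fun m => ((neg_nonpos.mpr m.cast_nonneg).trans_lt hy).ne')).log
      (Real.Gamma_pos_of_pos hy).ne'
  rw [← deriv_comp_add_const, one_div, ← Real.deriv_log,
    ← deriv_add (hder hx) (Real.differentiableAt_log hx.ne')]
  apply Filter.EventuallyEq.deriv_eq
  filter_upwards [eventually_gt_nhds hx] with y hy
  simp only [Pi.add_apply, Real.Gamma_add_one hy.ne',
    Real.log_mul hy.ne' (Real.Gamma_pos_of_pos hy).ne', add_comm]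

theorem digamma_half : deriv (fun y => Real.log (Real.Gamma y)) (1/2 : ℝ)
    = -(Real.eulerMascheroniConstant + 2 * Real.log 2) := by
  have h := (Real.hasDerivAt_Gamma_one_half.log (Real.Gamma_pos_of_pos one_half_pos).ne')
  rw [h.deriv, Real.Gamma_one_half_eq]
  have : Real.sqrt Real.pi ≠ 0 := by positivity
  field_simp

theorem digamma_nat_add_half (n : ℕ) :
    deriv (fun y => Real.log (Real.Gamma y)) ((n:ℝ) + 1/2)
      = -(Real.eulerMascheroniConstant + 2 * Real.log 2)
        + 2 * ∑ j ∈ Finset.range n, 1/(2*(j:ℝ)+1) := by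
  induction n with
  | zero => simpa using digamma_half
  | succ n ih =>
    have h1 : ((n:ℝ)+1) + 1/2 = ((n:ℝ) + 1/2) + 1 := by ring
    have h2 : (0:ℝ) < (n:ℝ) + 1/2 := by positivity
    rw [Finset.sum_range_succ]
    push_cast
    rw [h1, digamma_rec h2, ih]
    have : (1:ℝ) / ((n:ℝ)+1/2) = 2 * (1/(2*(n:ℝ)+1)) := by
      rw [div_eq_iff (by positivity)]
      field_simp
    rw [this]; ring

theorem sumO (N : ℕ) :
    ∑ k ∈ Finset.range N, ((k:ℝ)+1) * (∑ j ∈ Finset.range (k+1), 1/(2*(j:ℝ)+1))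
      = (2*(N:ℝ)+1)^2/8 * (∑ j ∈ Finset.range N, 1/(2*(j:ℝ)+1)) - (N:ℝ)^2/8 := by
  induction N with
  | zero => simp
  | succ N ih =>
    rw [Finset.sum_range_succ, ih, Finset.sum_range_succ (n := N)]
    have h : (2*(N:ℝ)+1) ≠ 0 := by positivity
    push_cast
    field_simp
    ring

end Aux

open Polynomial.Chebyshev in
theorem integral_gegenbauer2_weighted (n : ℕ) (hn : 2 ≤ n) :
    (∫ x in (0 : ℝ)..1, (x ^ 2 - 1) * ((gegenbauer2 (n - 2)).eval x) ^ 2)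
      = -((2 * (n : ℝ) ^ 2 - 1) / 16)
          * (digamma ((n : ℝ) + 1 / 2) + Real.eulerMascheroniConstant + Real.log 4)
        + (n : ℝ) ^ 2 / 8 := by
  obtain ⟨m, rfl⟩ : ∃ m, n = m + 2 := ⟨n - 2, by omega⟩
  have hpt : ∀ x : ℝ, (x ^ 2 - 1) * ((gegenbauer2 (m + 2 - 2)).eval x) ^ 2
      = (1/4 : ℝ) * ( ((m:ℝ)+1)^2 * ((U ℝ ((m:ℤ)+1)).eval x)^2
          - 4 * ∑ k ∈ Finset.range (m+1), ((k:ℝ)+1) * ((U ℝ (k:ℤ)).eval x)^2 ) := by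
    intro x
    have hk := congrArg (eval x) (key (m+1))
    simp only [eval_mul, eval_pow, eval_sub, eval_ofNat, eval_natCast, eval_finset_sum,
      eval_add, eval_one, eval_X] at hk
    simp only [Nat.add_sub_cancel, gegenbauer2, eval_mul, eval_C, eval_pow]
    push_cast at hk ⊢
    linear_combination hk / 4
  rw [intervalIntegral.integral_congr (g := fun x => (1/4 : ℝ) * ( ((m:ℝ)+1)^2 * ((U ℝ ((m:ℤ)+1)).eval x)^2
          - 4 * ∑ k ∈ Finset.range (m+1), ((k:ℝ)+1) * ((U ℝ (k:ℤ)).eval x)^2 )) (fun x _ => hpt x)]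
  rw [intervalIntegral.integral_const_mul]
  have hi1 : IntervalIntegrable (fun x => ((m:ℝ)+1)^2 * ((U ℝ ((m:ℤ)+1)).eval x)^2) MeasureTheory.volume 0 1 :=
    (continuous_const.mul ((Polynomial.continuous _).pow 2)).intervalIntegrable _ _
  have hi2 : IntervalIntegrable (fun x => (4:ℝ) * ∑ k ∈ Finset.range (m+1), ((k:ℝ)+1) * ((U ℝ (k:ℤ)).eval x)^2) MeasureTheory.volume 0 1 := by
    apply Continuous.intervalIntegrable
    exact continuous_const.mul (continuous_finset_sum _ fun k _ =>
      continuous_const.mul ((Polynomial.continuous _).pow 2))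
  rw [intervalIntegral.integral_sub hi1 hi2,
    intervalIntegral.integral_const_mul, intervalIntegral.integral_const_mul,
    intervalIntegral.integral_finset_sum (f := fun (k : ℕ) x => ((k:ℝ)+1) * ((U ℝ (k:ℤ)).eval x)^2)
      (fun k _ => (continuous_const.mul ((Polynomial.continuous _).pow 2)).intervalIntegrable _ _)]
  have hJ1 : ∫ x in (0:ℝ)..1, ((U ℝ ((m:ℤ)+1)).eval x)^2
      = ∑ j ∈ Finset.range (m+2), 1/(2*(j:ℝ)+1) := by
    have := Jlem (m+1)
    push_cast at this ⊢
    convert this using 3 <;> push_cast <;> ring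
  rw [hJ1]
  have hJ2 : ∀ k : ℕ, (∫ x in (0:ℝ)..1, ((k:ℝ)+1) * ((U ℝ (k:ℤ)).eval x)^2)
      = ((k:ℝ)+1) * ∑ j ∈ Finset.range (k+1), 1/(2*(j:ℝ)+1) := by
    intro k
    rw [intervalIntegral.integral_const_mul, Jlem k]
  simp only [hJ2]
  rw [sumO (m+1)]
  have hD := digamma_nat_add_half (m+2)
  have hDig : digamma ((m:ℝ)+2+1/2) = -(Real.eulerMascheroniConstant + 2 * Real.log 2)
        + 2 * ∑ j ∈ Finset.range (m+2), 1/(2*(j:ℝ)+1) := by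
    rw [digamma]
    push_cast at hD
    convert hD using 2
  have hlog4 : Real.log 4 = 2 * Real.log 2 := by
    rw [show (4:ℝ) = 2^2 by norm_num, Real.log_pow]; push_cast; ring
  push_cast
  rw [hDig, hlog4]
  rw [Finset.sum_range_succ (n := m+1)]
  have h23 : (2*((m:ℝ)+1)+1) ≠ 0 := by positivity
  push_cast
  field_simp
  ring
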